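/- arXiv:1007.3137 — 2 statements merged into one kernel-verified Lean document; each statement's English description precedes it below -/
import Mathlib

section
/- Let s(w) = (w² + y₁²)(w² + y₂²)/w³ with y₁ > y₂ > 0 real. If w_a, w_b ∈ ℂ \ {0} satisfy w_a ≠ w_b, |w_a| = |w_b|, and s(w_a) = s(w_b) = z, then z is real or purely imaginary, i.e. z ∈ ℝ ∪ iℝ. -/
open ComplexConjugate

theorem equal_modulus_values_real_or_imaginary (y₁ y₂ : ℝ) (h21 : y₂ < y₁) (h2 : 0 < y₂)
    (wa wb z : ℂ) (hwa : wa ≠ 0) (hwb : wb ≠ 0) (hne : wa ≠ wb)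
    (habs : ‖wa‖ = ‖wb‖)
    (hza : (wa ^ 2 + (y₁ : ℂ) ^ 2) * (wa ^ 2 + (y₂ : ℂ) ^ 2) / wa ^ 3 = z)
    (hzb : (wb ^ 2 + (y₁ : ℂ) ^ 2) * (wb ^ 2 + (y₂ : ℂ) ^ 2) / wb ^ 3 = z) :
    z.im = 0 ∨ z.re = 0 := by
  set t : ℝ := Complex.normSq wa with htdef
  have ht0 : 0 < t := Complex.normSq_pos.mpr hwa
  have htC : (t : ℂ) ≠ 0 := Complex.ofReal_ne_zero.mpr ht0.ne'
  have hca : wa * conj wa = (t : ℂ) := Complex.mul_conj wa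
  have hcb : wb * conj wb = (t : ℂ) := by
    rw [Complex.mul_conj]
    norm_cast
    rw [htdef, ← Complex.sq_norm, ← Complex.sq_norm, habs]
  set p : ℂ := wa * wb with hpdef
  set q : ℂ := wa + wb with hqdef
  have hp0 : p ≠ 0 := mul_ne_zero hwa hwb
  have hpc : p * conj p = (t : ℂ) ^ 2 := by
    simp only [hpdef, map_mul]
    linear_combination (wb * conj wb) * hca + (t : ℂ) * hcb
  have hqc : conj q * p = (t : ℂ) * q := by
    simp only [hqdef, hpdef, map_add]
    linear_combination wb * hca + wa * hcb
  have ha : (wa ^ 2 + (y₁ : ℂ) ^ 2) * (wa ^ 2 + (y₂ : ℂ) ^ 2) = z * wa ^ 3 :=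
    (div_eq_iff (pow_ne_zero 3 hwa)).mp hza
  have hb : (wb ^ 2 + (y₁ : ℂ) ^ 2) * (wb ^ 2 + (y₂ : ℂ) ^ 2) = z * wb ^ 3 :=
    (div_eq_iff (pow_ne_zero 3 hwb)).mp hzb
  have h1 : ((y₁ : ℂ) ^ 2 * (y₂ : ℂ) ^ 2) * q ^ 2
      = p ^ 3 - ((y₁ : ℂ) ^ 2 + (y₂ : ℂ) ^ 2) * p ^ 2 + ((y₁ : ℂ) ^ 2 * (y₂ : ℂ) ^ 2) * p := by
    have hfac : (wa - wb) * (((y₁ : ℂ) ^ 2 * (y₂ : ℂ) ^ 2) * q ^ 2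
        - (p ^ 3 - ((y₁ : ℂ) ^ 2 + (y₂ : ℂ) ^ 2) * p ^ 2
          + ((y₁ : ℂ) ^ 2 * (y₂ : ℂ) ^ 2) * p)) = 0 := by
      simp only [hpdef, hqdef]
      linear_combination wa ^ 3 * hb - wb ^ 3 * ha
    have h := (mul_eq_zero.mp hfac).resolve_left (sub_ne_zero.mpr hne)
    exact sub_eq_zero.mp h
  have hz2Q : z * p ^ 3 = q * (p ^ 2 - (y₁ : ℂ) ^ 2 * (y₂ : ℂ) ^ 2) * p := by
    simp only [hpdef, hqdef] at h1 ⊢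
    linear_combination (-(wb ^ 3) / 2) * ha + (-(wa ^ 3) / 2) * hb + ((wa + wb) / 2) * h1
  have hz2 : z * p ^ 2 = q * (p ^ 2 - (y₁ : ℂ) ^ 2 * (y₂ : ℂ) ^ 2) :=
    mul_right_cancel₀ hp0 (by linear_combination hz2Q)
  have h1c : ((y₁ : ℂ) ^ 2 * (y₂ : ℂ) ^ 2) * (conj q) ^ 2
      = (conj p) ^ 3 - ((y₁ : ℂ) ^ 2 + (y₂ : ℂ) ^ 2) * (conj p) ^ 2
        + ((y₁ : ℂ) ^ 2 * (y₂ : ℂ) ^ 2) * (conj p) := by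
    have h := congrArg (starRingEnd ℂ) h1
    simp only [map_mul, map_add, map_sub, map_pow, Complex.conj_ofReal] at h
    exact h
  have hz2c : conj z * (conj p) ^ 2
      = conj q * ((conj p) ^ 2 - (y₁ : ℂ) ^ 2 * (y₂ : ℂ) ^ 2) := by
    have h := congrArg (starRingEnd ℂ) hz2
    simp only [map_mul, map_add, map_sub, map_pow, Complex.conj_ofReal] at h
    exact h
  have h1cp : ((y₁ : ℂ) ^ 2 * (y₂ : ℂ) ^ 2) * (t : ℂ) ^ 2 * q ^ 2 * p
      = (t : ℂ) ^ 6 - ((y₁ : ℂ) ^ 2 + (y₂ : ℂ) ^ 2) * (t : ℂ) ^ 4 * p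
        + ((y₁ : ℂ) ^ 2 * (y₂ : ℂ) ^ 2) * (t : ℂ) ^ 2 * p ^ 2 := by
    linear_combination p ^ 3 * h1c
      - ((y₁ : ℂ) ^ 2 * (y₂ : ℂ) ^ 2) * p * (conj q * p + (t : ℂ) * q) * hqc
      + ((conj p) ^ 2 * p ^ 2 + (t : ℂ) ^ 2 * (conj p) * p + (t : ℂ) ^ 4
        - ((y₁ : ℂ) ^ 2 + (y₂ : ℂ) ^ 2) * p * ((conj p) * p + (t : ℂ) ^ 2)
        + ((y₁ : ℂ) ^ 2 * (y₂ : ℂ) ^ 2) * p ^ 2) * hpc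
  have master' : (t : ℂ) ^ 2 * ((p ^ 2 - (t : ℂ) ^ 2)
      * (p ^ 2 + (t : ℂ) ^ 2 - ((y₁ : ℂ) ^ 2 + (y₂ : ℂ) ^ 2) * p)) = 0 := by
    linear_combination h1cp - (t : ℂ) ^ 2 * p * h1
  have master : (p ^ 2 - (t : ℂ) ^ 2)
      * (p ^ 2 + (t : ℂ) ^ 2 - ((y₁ : ℂ) ^ 2 + (y₂ : ℂ) ^ 2) * p) = 0 := by
    rcases mul_eq_zero.mp master' with h | h
    · exact absurd h (pow_ne_zero 2 htC)
    · exact h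
  rcases mul_eq_zero.mp master with hA | hB
  · -- Case A : p^2 = t^2
    have hA : p ^ 2 = (t : ℂ) ^ 2 := sub_eq_zero.mp hA
    have hAp : conj z * (t : ℂ) ^ 4 * p
        = (t : ℂ) * q * ((t : ℂ) ^ 4 - (y₁ : ℂ) ^ 2 * (y₂ : ℂ) ^ 2 * p ^ 2) := by
      linear_combination p ^ 3 * hz2c
        + ((conj p) ^ 2 * p ^ 2 - (y₁ : ℂ) ^ 2 * (y₂ : ℂ) ^ 2 * p ^ 2) * hqc
        + (((t : ℂ) * q - conj z * p) * ((conj p) * p + (t : ℂ) ^ 2)) * hpc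
    have hAz : (t : ℂ) ^ 3 * p * (conj z * (t : ℂ) - z * p) = 0 := by
      linear_combination hAp - (t : ℂ) ^ 3 * hz2
        - (t : ℂ) * q * ((t : ℂ) ^ 2 + (y₁ : ℂ) ^ 2 * (y₂ : ℂ) ^ 2) * hA
    have hzz : conj z * (t : ℂ) = z * p := by
      rcases mul_eq_zero.mp hAz with h | h
      · exact absurd h (mul_ne_zero (pow_ne_zero 3 htC) hp0)
      · exact sub_eq_zero.mp h
    have hpt : (p - (t : ℂ)) * (p + (t : ℂ)) = 0 := by linear_combination hA
    rcases mul_eq_zero.mp hpt with h | h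
    · left
      have hp' : p = (t : ℂ) := sub_eq_zero.mp h
      rw [hp'] at hzz
      have : conj z = z := mul_right_cancel₀ htC hzz
      exact Complex.conj_eq_iff_im.mp this
    · right
      have hp' : p = -(t : ℂ) := eq_neg_of_add_eq_zero_left h
      rw [hp'] at hzz
      have hcz : conj z = -z := by
        have := mul_right_cancel₀ htC (by linear_combination hzz : conj z * (t : ℂ) = (-z) * (t : ℂ))
        exact this
      have h := congrArg Complex.re hcz
      simp only [Complex.conj_re, Complex.neg_re] at h
      linarith
  · -- Case B : p^2 + t^2 = a p ; derive contradiction unless q = 0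
    by_cases hq0 : q = 0
    · left
      have hz0 : z = 0 := by
        have h := hz2
        rw [hq0, zero_mul] at h
        exact (mul_eq_zero.mp h).resolve_right (pow_ne_zero 2 hp0)
      simp [hz0]
    · exfalso
      have hq2 : ((y₁ : ℂ) ^ 2 * (y₂ : ℂ) ^ 2) * q ^ 2
          = p * ((y₁ : ℂ) ^ 2 * (y₂ : ℂ) ^ 2 - (t : ℂ) ^ 2) := by
        linear_combination h1 + p * hB
      have hk : ((y₁ : ℂ) ^ 2 * (y₂ : ℂ) ^ 2) * conj q * q ^ 2
          = (t : ℂ) * q * ((y₁ : ℂ) ^ 2 * (y₂ : ℂ) ^ 2 - (t : ℂ) ^ 2) := by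
        linear_combination conj q * hq2 + ((y₁ : ℂ) ^ 2 * (y₂ : ℂ) ^ 2 - (t : ℂ) ^ 2) * hqc
      have hk2 : q * (((y₁ : ℂ) ^ 2 * (y₂ : ℂ) ^ 2) * (q * conj q)
          - (t : ℂ) * ((y₁ : ℂ) ^ 2 * (y₂ : ℂ) ^ 2 - (t : ℂ) ^ 2)) = 0 := by
        linear_combination hk
      have hk3 : ((y₁ : ℂ) ^ 2 * (y₂ : ℂ) ^ 2) * (q * conj q)
          = (t : ℂ) * ((y₁ : ℂ) ^ 2 * (y₂ : ℂ) ^ 2 - (t : ℂ) ^ 2) :=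
        sub_eq_zero.mp ((mul_eq_zero.mp hk2).resolve_left hq0)
      rw [Complex.mul_conj] at hk3
      have hreal : y₁ ^ 2 * y₂ ^ 2 * Complex.normSq q = t * (y₁ ^ 2 * y₂ ^ 2 - t ^ 2) := by
        exact_mod_cast hk3
      have hsum : p + conj p = (y₁ : ℂ) ^ 2 + (y₂ : ℂ) ^ 2 := by
        have hfac2 : p * (p + conj p - ((y₁ : ℂ) ^ 2 + (y₂ : ℂ) ^ 2)) = 0 := by
          linear_combination hB + hpc
        exact sub_eq_zero.mp ((mul_eq_zero.mp hfac2).resolve_left hp0)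
      rw [Complex.add_conj] at hsum
      have hre : 2 * p.re = y₁ ^ 2 + y₂ ^ 2 := by exact_mod_cast hsum
      have hnp : Complex.normSq p = t ^ 2 := by
        have h := hpc
        rw [Complex.mul_conj] at h
        exact_mod_cast h
      have him : p.re ^ 2 + p.im ^ 2 = t ^ 2 := by
        rw [← hnp, Complex.normSq_apply]; ring
      have hq0' : 0 < Complex.normSq q := Complex.normSq_pos.mpr hq0
      have hy : y₂ ^ 2 < y₁ ^ 2 := by nlinarith
      have h4 : 4 * t ^ 2 = (y₁ ^ 2 + y₂ ^ 2) ^ 2 + 4 * p.im ^ 2 := by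
        linear_combination (-4 : ℝ) * him + (2 * p.re + (y₁ ^ 2 + y₂ ^ 2)) * hre
      have hbt : y₁ ^ 2 * y₂ ^ 2 < t ^ 2 := by
        nlinarith [sq_nonneg p.im, mul_pos (sub_pos.mpr hy) (sub_pos.mpr hy)]
      nlinarith [mul_pos (mul_pos (pow_pos (h2.trans h21) 2) (pow_pos h2 2)) hq0',
        mul_pos ht0 (sub_pos.mpr hbt)]
end

section
/- Let ŝ(w) = (w + ξ)²(w − x₁)(w − x₂)/w³ with ξ > 0 and x₁, x₂ < 0 real. If w_a, w_b ∈ ℂ \ {0} satisfy w_a ≠ w_b, |w_a| = |w_b|, and ŝ(w_a) = ŝ(w_b) = z, then z is real; in fact w_b is the complex conjugate of w_a. -/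
lemma key_mono_two_cut (ξ x₁ x₂ s a b : ℝ) (hξ : 0 < ξ)
    (hx₁ : x₁ < 0) (hx₂ : x₂ < 0)
    (ha : a ^ 2 ≤ s) (hb : b ^ 2 ≤ s) (hab : a < b) :
    (s + 2*ξ*a + ξ^2)^2 * (s - 2*x₁*a + x₁^2) * (s - 2*x₂*a + x₂^2)
      < (s + 2*ξ*b + ξ^2)^2 * (s - 2*x₁*b + x₁^2) * (s - 2*x₂*b + x₂^2) := by
  have hs0 : 0 ≤ s := le_trans (sq_nonneg a) ha
  have h1a : 0 ≤ s + 2*ξ*a + ξ^2 := by nlinarith [sq_nonneg (a+ξ)]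
  have h2a : 0 ≤ s - 2*x₁*a + x₁^2 := by nlinarith [sq_nonneg (a-x₁)]
  have h3a : 0 ≤ s - 2*x₂*a + x₂^2 := by nlinarith [sq_nonneg (a-x₂)]
  have hbpos : b ^ 2 < s ∨ 0 ≤ b := by
    rcases le_or_gt 0 b with h | h
    · exact Or.inr h
    · left
      have hp := mul_pos (by linarith : (0:ℝ) < b - a) (by linarith : (0:ℝ) < -a - b)
      nlinarith
  have h1b : 0 < s + 2*ξ*b + ξ^2 := by
    rcases hbpos with h | h
    · nlinarith [sq_nonneg (b+ξ)]
    · nlinarith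
  have h2b : 0 < s - 2*x₁*b + x₁^2 := by
    rcases hbpos with h | h
    · nlinarith [sq_nonneg (b-x₁)]
    · nlinarith
  have h3b : 0 < s - 2*x₂*b + x₂^2 := by
    rcases hbpos with h | h
    · nlinarith [sq_nonneg (b-x₂)]
    · nlinarith
  have h1 : s + 2*ξ*a + ξ^2 < s + 2*ξ*b + ξ^2 := by nlinarith
  have h2 : s - 2*x₁*a + x₁^2 < s - 2*x₁*b + x₁^2 := by nlinarith
  have h3 : s - 2*x₂*a + x₂^2 < s - 2*x₂*b + x₂^2 := by nlinarith
  have hsq : (s + 2*ξ*a + ξ^2)^2 < (s + 2*ξ*b + ξ^2)^2 :=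
    pow_lt_pow_left₀ h1 h1a (by norm_num)
  have step1 : (s + 2*ξ*a + ξ^2)^2 * (s - 2*x₁*a + x₁^2)
      < (s + 2*ξ*b + ξ^2)^2 * (s - 2*x₁*b + x₁^2) :=
    mul_lt_mul'' hsq h2 (pow_nonneg h1a 2) h2a
  exact mul_lt_mul'' step1 h3 (mul_nonneg (pow_nonneg h1a 2) h2a) h3a

lemma key_eq_two_cut (ξ x₁ x₂ N a p b q : ℝ) (hξ : 0 < ξ)
    (hx₁ : x₁ < 0) (hx₂ : x₂ < 0)
    (hss : a ^ 2 + p ^ 2 = b ^ 2 + q ^ 2)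
    (hE1 : ((a^2+p^2) + 2*ξ*a + ξ^2)^2 * ((a^2+p^2) - 2*x₁*a + x₁^2)
      * ((a^2+p^2) - 2*x₂*a + x₂^2) = N * (a^2+p^2)^3)
    (hE2 : ((b^2+q^2) + 2*ξ*b + ξ^2)^2 * ((b^2+q^2) - 2*x₁*b + x₁^2)
      * ((b^2+q^2) - 2*x₂*b + x₂^2) = N * (b^2+q^2)^3) :
    a = b ∧ p ^ 2 = q ^ 2 := by
  obtain ⟨s, hs⟩ : ∃ s : ℝ, a ^ 2 + p ^ 2 = s := ⟨_, rfl⟩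
  have hsb : b ^ 2 + q ^ 2 = s := hss.symm.trans hs
  rw [hs] at hE1
  rw [hsb] at hE2
  have hE : (s + 2*ξ*a + ξ^2)^2 * (s - 2*x₁*a + x₁^2) * (s - 2*x₂*a + x₂^2)
      = (s + 2*ξ*b + ξ^2)^2 * (s - 2*x₁*b + x₁^2) * (s - 2*x₂*b + x₂^2) :=
    hE1.trans hE2.symm
  have ha2 : a ^ 2 ≤ s := by linarith [sq_nonneg p]
  have hb2 : b ^ 2 ≤ s := by linarith [sq_nonneg q]
  have hab : a = b := by
    rcases lt_trichotomy a b with h | h | h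
    · exact absurd hE (ne_of_lt (key_mono_two_cut ξ x₁ x₂ s a b hξ hx₁ hx₂ ha2 hb2 h))
    · exact h
    · exact absurd hE.symm (ne_of_lt (key_mono_two_cut ξ x₁ x₂ s b a hξ hx₁ hx₂ hb2 ha2 h))
  exact ⟨hab, by linear_combination hss - (a + b) * hab⟩

theorem equal_modulus_values_real_two_cut (ξ x₁ x₂ : ℝ) (hξ : 0 < ξ)
    (hx₁ : x₁ < 0) (hx₂ : x₂ < 0)
    (wa wb z : ℂ) (hwa : wa ≠ 0) (hwb : wb ≠ 0) (hne : wa ≠ wb)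
    (habs : ‖wa‖ = ‖wb‖)
    (hza : (wa + (ξ : ℂ)) ^ 2 * (wa - (x₁ : ℂ)) * (wa - (x₂ : ℂ)) / wa ^ 3 = z)
    (hzb : (wb + (ξ : ℂ)) ^ 2 * (wb - (x₁ : ℂ)) * (wb - (x₂ : ℂ)) / wb ^ 3 = z) :
    wb = starRingEnd ℂ wa ∧ z.im = 0 := by
  have hss : wa.re ^ 2 + wa.im ^ 2 = wb.re ^ 2 + wb.im ^ 2 := by
    have h : Complex.normSq wa = Complex.normSq wb := by
      rw [← Complex.sq_norm, ← Complex.sq_norm, habs]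
    simp only [Complex.normSq_apply] at h
    linear_combination h
  have h1 : (wa + (ξ : ℂ)) ^ 2 * (wa - (x₁ : ℂ)) * (wa - (x₂ : ℂ)) = z * wa ^ 3 := by
    rw [div_eq_iff (pow_ne_zero 3 hwa)] at hza; exact hza
  have h2 : (wb + (ξ : ℂ)) ^ 2 * (wb - (x₁ : ℂ)) * (wb - (x₂ : ℂ)) = z * wb ^ 3 := by
    rw [div_eq_iff (pow_ne_zero 3 hwb)] at hzb; exact hzb
  have hE1 : ((wa.re^2+wa.im^2) + 2*ξ*wa.re + ξ^2)^2 * ((wa.re^2+wa.im^2) - 2*x₁*wa.re + x₁^2)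
      * ((wa.re^2+wa.im^2) - 2*x₂*wa.re + x₂^2) = (z.re^2 + z.im^2) * (wa.re^2+wa.im^2)^3 := by
    have h := congrArg Complex.normSq h1
    simp only [map_mul, map_pow, Complex.normSq_apply, Complex.add_re, Complex.add_im,
      Complex.sub_re, Complex.sub_im, Complex.ofReal_re, Complex.ofReal_im] at h
    linear_combination h
  have hE2 : ((wb.re^2+wb.im^2) + 2*ξ*wb.re + ξ^2)^2 * ((wb.re^2+wb.im^2) - 2*x₁*wb.re + x₁^2)
      * ((wb.re^2+wb.im^2) - 2*x₂*wb.re + x₂^2) = (z.re^2 + z.im^2) * (wb.re^2+wb.im^2)^3 := by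
    have h := congrArg Complex.normSq h2
    simp only [map_mul, map_pow, Complex.normSq_apply, Complex.add_re, Complex.add_im,
      Complex.sub_re, Complex.sub_im, Complex.ofReal_re, Complex.ofReal_im] at h
    linear_combination h
  obtain ⟨hab, hpq⟩ := key_eq_two_cut ξ x₁ x₂ (z.re^2 + z.im^2) wa.re wa.im wb.re wb.im
    hξ hx₁ hx₂ hss hE1 hE2
  have him : wb.im = -wa.im := by
    rcases sq_eq_sq_iff_eq_or_eq_neg.mp hpq.symm with h | h
    · exact absurd (Complex.ext hab h.symm) hne
    · exact h
  have hconj : wb = starRingEnd ℂ wa := by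
    apply Complex.ext
    · simpa [Complex.conj_re] using hab.symm
    · simpa [Complex.conj_im] using him
  refine ⟨hconj, ?_⟩
  have h3 := congrArg (starRingEnd ℂ) h1
  simp only [map_mul, map_pow, map_add, map_sub, Complex.conj_ofReal] at h3
  rw [← hconj] at h3
  have hz : z * wb ^ 3 = starRingEnd ℂ z * wb ^ 3 := by rw [← h2, h3]
  have hzz : z = starRingEnd ℂ z := mul_right_cancel₀ (pow_ne_zero 3 hwb) hz
  exact Complex.conj_eq_iff_im.mp hzz.symm
end
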